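/- Let (X, μ) be a measure space, N a positive integer, and f_1, …, f_N : X → ℂ measurable functions forming an orthonormal family in L²(X, μ), i.e. ∫_X f_i(x) · conj(f_j(x)) dμ(x) = δ_{ij}. Then the measure ν_N on X^N with density (x_1, …, x_N) ↦ (1/N!) · |det (f_j(x_i))_{i,j=1}^N|² with respect to μ^{⊗N} is a probability measure, i.e. ∫_{X^N} (1/N!) · |det (f_j(x_i))_{i,j=1}^N|² dμ(x_1) ⋯ dμ(x_N) = 1. -/

import Mathlib

open MeasureTheory Complex Set
open scoped NNReal ENNReal

lemma memLp_conj {X : Type*} [MeasurableSpace X] {μ : Measure X} {g : X → ℂ}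
    (hmeas : Measurable g) (h : MemLp g 2 μ) :
    MemLp (fun y => (starRingEnd ℂ) (g y)) 2 μ :=
  h.of_le (Measurable.aestronglyMeasurable (Complex.continuous_conj.measurable.comp hmeas))
    (Filter.Eventually.of_forall fun y => by simp)

lemma core_lintegral {X : Type*} [MeasurableSpace X]
    (μ : Measure X) [SigmaFinite μ] (N : ℕ) (f : Fin N → X → ℂ)
    (hmeas : ∀ j, Measurable (f j))
    (hL2 : ∀ j, MemLp (f j) 2 μ)
    (horth : ∀ i j, (∫ x, f i x * (starRingEnd ℂ) (f j x) ∂μ) =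
      if i = j then 1 else 0) :
    ∫⁻ x : Fin N → X, ENNReal.ofReal ((Nat.factorial N : ℝ)⁻¹ *
      ‖(Matrix.of fun i j : Fin N => f j (x i)).det‖ ^ 2)
      ∂(Measure.pi fun _ : Fin N => μ) = 1 := by
  classical
  letI : MeasureSpace X := ⟨μ⟩
  haveI : SigmaFinite (volume : Measure X) := ‹SigmaFinite μ›
  set D : (Fin N → X) → ℂ := fun x =>
    ∑ σ : Equiv.Perm (Fin N), ((Equiv.Perm.sign σ : ℤ) : ℂ) * ∏ i, f (σ i) (x i) with hDdef
  have hD : ∀ x : Fin N → X, (Matrix.of fun i j : Fin N => f j (x i)).det = D x := by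
    intro x
    rw [← Matrix.det_transpose, Matrix.det_apply']
    rfl
  -- per-pair product functions
  have hint : ∀ a b : Fin N, Integrable
      (fun y : X => f a y * (starRingEnd ℂ) (f b y)) μ := by
    intro a b
    rw [← memLp_one_iff_integrable]
    have := (memLp_conj (hmeas b) (hL2 b)).smul (hL2 a) (p := 2) (q := 2) (r := 1)
    exact this
  have hprod_int : ∀ σ τ : Equiv.Perm (Fin N), Integrable
      (fun x : Fin N → X => ∏ i, (f (σ i) (x i) * (starRingEnd ℂ) (f (τ i) (x i))))
      (Measure.pi fun _ : Fin N => μ) := by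
    intro σ τ
    exact Integrable.fintype_prod (f := fun i y => f (σ i) y * (starRingEnd ℂ) (f (τ i) y))
      (fun i => hint (σ i) (τ i))
  have hprod_eq : ∀ σ τ : Equiv.Perm (Fin N),
      (∫ x : Fin N → X, ∏ i, (f (σ i) (x i) * (starRingEnd ℂ) (f (τ i) (x i)))
        ∂(Measure.pi fun _ : Fin N => μ)) = if σ = τ then 1 else 0 := by
    intro σ τ
    rw [MeasureTheory.integral_fintype_prod_eq_prod (f := fun i y =>
        f (σ i) y * (starRingEnd ℂ) (f (τ i) y))]
    by_cases h : σ = τ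
    · subst h; simp [horth]
    · rw [if_neg h]
      obtain ⟨i, hi⟩ : ∃ i, σ i ≠ τ i := by
        by_contra hc
        push_neg at hc
        exact h (Equiv.ext hc)
      apply Finset.prod_eq_zero (Finset.mem_univ i)
      simp [horth, hi]
  -- expansion of D x * conj (D x)
  have hexp : ∀ x : Fin N → X, D x * (starRingEnd ℂ) (D x) =
      ∑ σ : Equiv.Perm (Fin N), ∑ τ : Equiv.Perm (Fin N),
        (((Equiv.Perm.sign σ : ℤ) : ℂ) * ((Equiv.Perm.sign τ : ℤ) : ℂ)) *
          ∏ i, (f (σ i) (x i) * (starRingEnd ℂ) (f (τ i) (x i))) := by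
    intro x
    rw [hDdef]
    simp only [map_sum, map_mul, map_prod, map_intCast]
    rw [Finset.sum_mul_sum]
    refine Finset.sum_congr rfl fun σ _ => Finset.sum_congr rfl fun τ _ => ?_
    rw [Finset.prod_mul_distrib]
    ring
  have hDint : Integrable (fun x => D x * (starRingEnd ℂ) (D x))
      (Measure.pi fun _ : Fin N => μ) := by
    rw [show (fun x => D x * (starRingEnd ℂ) (D x)) = fun x =>
      ∑ σ : Equiv.Perm (Fin N), ∑ τ : Equiv.Perm (Fin N),
        (((Equiv.Perm.sign σ : ℤ) : ℂ) * ((Equiv.Perm.sign τ : ℤ) : ℂ)) *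
          ∏ i, (f (σ i) (x i) * (starRingEnd ℂ) (f (τ i) (x i))) from funext hexp]
    exact integrable_finset_sum _ fun σ _ => integrable_finset_sum _ fun τ _ =>
      ((hprod_int σ τ).const_mul _)
  have hDval : (∫ x, D x * (starRingEnd ℂ) (D x) ∂(Measure.pi fun _ : Fin N => μ))
      = (Nat.factorial N : ℂ) := by
    rw [show (fun x => D x * (starRingEnd ℂ) (D x)) = fun x =>
      ∑ σ : Equiv.Perm (Fin N), ∑ τ : Equiv.Perm (Fin N),
        (((Equiv.Perm.sign σ : ℤ) : ℂ) * ((Equiv.Perm.sign τ : ℤ) : ℂ)) *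
          ∏ i, (f (σ i) (x i) * (starRingEnd ℂ) (f (τ i) (x i))) from funext hexp]
    rw [integral_finset_sum _ fun σ _ => integrable_finset_sum _ fun τ _ =>
      ((hprod_int σ τ).const_mul _)]
    have : ∀ σ : Equiv.Perm (Fin N),
        (∫ x, ∑ τ : Equiv.Perm (Fin N),
          (((Equiv.Perm.sign σ : ℤ) : ℂ) * ((Equiv.Perm.sign τ : ℤ) : ℂ)) *
            ∏ i, (f (σ i) (x i) * (starRingEnd ℂ) (f (τ i) (x i)))
          ∂(Measure.pi fun _ : Fin N => μ)) = 1 := by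
      intro σ
      rw [integral_finset_sum _ fun τ _ => ((hprod_int σ τ).const_mul _)]
      have : ∀ τ : Equiv.Perm (Fin N),
          (∫ x, (((Equiv.Perm.sign σ : ℤ) : ℂ) * ((Equiv.Perm.sign τ : ℤ) : ℂ)) *
            ∏ i, (f (σ i) (x i) * (starRingEnd ℂ) (f (τ i) (x i)))
            ∂(Measure.pi fun _ : Fin N => μ)) =
          if σ = τ then 1 else 0 := by
        intro τ
        rw [integral_const_mul, hprod_eq]
        by_cases h : σ = τ
        · subst h
          rcases Int.units_eq_one_or (Equiv.Perm.sign σ) with h1 | h1 <;> simp [h1]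
        · simp [h]
      simp [this]
    simp only [this, Finset.sum_const, Finset.card_univ, Fintype.card_perm,
      Fintype.card_fin, nsmul_eq_mul, mul_one]
  -- pass to real values
  set r : (Fin N → X) → ℝ := fun x =>
    (Nat.factorial N : ℝ)⁻¹ * ‖D x‖ ^ 2 with hrdef
  have hr_eq : ∀ x, r x = (Nat.factorial N : ℝ)⁻¹ * (D x * (starRingEnd ℂ) (D x)).re := by
    intro x
    rw [hrdef]
    simp [Complex.mul_conj, Complex.sq_norm]
  have hrint : Integrable r (Measure.pi fun _ : Fin N => μ) := by
    rw [show r = fun x => (Nat.factorial N : ℝ)⁻¹ * (D x * (starRingEnd ℂ) (D x)).re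
      from funext hr_eq]
    exact (hDint.re).const_mul _
  have hrval : (∫ x, r x ∂(Measure.pi fun _ : Fin N => μ)) = 1 := by
    rw [show r = fun x => (Nat.factorial N : ℝ)⁻¹ * (D x * (starRingEnd ℂ) (D x)).re
      from funext hr_eq]
    rw [integral_const_mul]
    simp only [← RCLike.re_eq_complex_re]
    rw [integral_re hDint, hDval]
    simp [Nat.factorial_ne_zero]
  have hr_nonneg : 0 ≤ᵐ[Measure.pi fun _ : Fin N => μ] r :=
    Filter.Eventually.of_forall fun x => mul_nonneg (by positivity) (by positivity)
  calc ∫⁻ x : Fin N → X, ENNReal.ofReal ((Nat.factorial N : ℝ)⁻¹ *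
      ‖(Matrix.of fun i j : Fin N => f j (x i)).det‖ ^ 2)
      ∂(Measure.pi fun _ : Fin N => μ)
      = ∫⁻ x, ENNReal.ofReal (r x) ∂(Measure.pi fun _ : Fin N => μ) := by
        simp only [hD, hrdef]
    _ = ENNReal.ofReal (∫ x, r x ∂(Measure.pi fun _ : Fin N => μ)) :=
        (ofReal_integral_eq_lintegral_ofReal hrint hr_nonneg).symm
    _ = 1 := by rw [hrval]; exact ENNReal.ofReal_one

lemma sf_restrict {X : Type*} [MeasurableSpace X] (μ : Measure X)
    {N : ℕ} (f : Fin N → X → ℂ) (hmeas : ∀ j, Measurable (f j))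
    (hL2 : ∀ j, MemLp (f j) 2 μ) :
    SigmaFinite (μ.restrict (⋃ j, {y | f j y ≠ 0})) := by
  set S : Set X := ⋃ j, {y | f j y ≠ 0} with hSdef
  have hS : MeasurableSet S :=
    MeasurableSet.iUnion fun j => ((hmeas j) (measurableSet_singleton 0)).compl
  set T : ℕ → Set X := fun n => Sᶜ ∪ ⋃ j, {y : X | ((n : ℝ≥0) + 1)⁻¹ ≤ ‖f j y‖₊} with hTdef
  refine ⟨⟨⟨T, fun _ => trivial, fun n => ?_, ?_⟩⟩⟩
  · refine lt_of_le_of_lt (measure_union_le _ _) ?_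
    have h1 : (μ.restrict S) Sᶜ = 0 := by
      rw [Measure.restrict_apply' hS]; simp
    rw [h1, zero_add]
    refine lt_of_le_of_lt (measure_iUnion_le _) ?_
    rw [tsum_fintype]
    refine ENNReal.sum_lt_top.mpr fun j _ => ?_
    refine lt_of_le_of_lt (Measure.le_iff'.mp Measure.restrict_le_self _) ?_
    exact (hL2 j).meas_ge_lt_top two_ne_zero ENNReal.ofNat_ne_top
      (by positivity)
  · ext y
    simp only [Set.mem_iUnion, Set.mem_union, Set.mem_univ, iff_true]
    by_cases hy : y ∈ S
    · rw [hSdef] at hy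
      simp only [Set.mem_iUnion, Set.mem_setOf_eq] at hy
      obtain ⟨j, hj⟩ := hy
      have hpos : 0 < ‖f j y‖₊ := by simpa using hj
      obtain ⟨n, hn⟩ := exists_nat_ge (‖f j y‖₊)⁻¹
      refine ⟨n, Or.inr ?_⟩
      refine Set.mem_iUnion.mpr ⟨j, ?_⟩
      have h2 : (‖f j y‖₊)⁻¹ ≤ (n : ℝ≥0) + 1 := le_trans hn (by simp)
      exact inv_le_of_inv_le₀ hpos h2
    · exact ⟨0, Or.inl hy⟩

lemma pi_mono_of_le {X : Type*} [MeasurableSpace X] {μ ν : Measure X} {N : ℕ}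
    (h : ∀ s : Set X, μ s ≤ ν s) :
    (Measure.pi fun _ : Fin N => μ) ≤ Measure.pi fun _ : Fin N => ν := by
  rw [Measure.le_iff]
  intro s hs
  rw [Measure.pi_def, Measure.pi_def, toMeasure_apply _ _ hs, toMeasure_apply _ _ hs]
  refine OuterMeasure.le_boundedBy.mpr (fun t => ?_) s
  refine le_trans (OuterMeasure.boundedBy_le _) ?_
  exact Finset.prod_le_prod' fun i _ => h _

lemma pi_restrict_le {X : Type*} [MeasurableSpace X] (μ : Measure X) {S : Set X}
    (hS : MeasurableSet S) (N : ℕ) :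
    (Measure.pi fun _ : Fin N => μ).restrict (Set.pi Set.univ fun _ => S)
      ≤ Measure.pi fun _ : Fin N => μ.restrict S := by
  have key : ((OuterMeasure.pi fun _ : Fin N => μ.toOuterMeasure).restrict
      (Set.pi Set.univ fun _ => S))
      ≤ OuterMeasure.pi fun _ : Fin N => (μ.restrict S).toOuterMeasure := by
    refine OuterMeasure.le_boundedBy.mpr fun t => ?_
    rw [OuterMeasure.restrict_apply]
    refine le_trans (OuterMeasure.boundedBy_le _) ?_
    refine Finset.prod_le_prod' fun i _ => ?_
    show μ _ ≤ (μ.restrict S) _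
    rw [Measure.restrict_apply' hS]
    refine measure_mono ?_
    rintro z ⟨x, ⟨hxt, hxA⟩, rfl⟩
    exact ⟨⟨x, hxt, rfl⟩, hxA i trivial⟩
  rw [Measure.le_iff]
  intro s hs
  have hA : MeasurableSet (Set.pi Set.univ fun _ : Fin N => S) :=
    MeasurableSet.univ_pi fun _ => hS
  rw [Measure.restrict_apply hs]
  rw [Measure.pi_def, Measure.pi_def, toMeasure_apply _ _ (hs.inter hA),
    toMeasure_apply _ _ hs]
  have := key s
  rwa [OuterMeasure.restrict_apply] at this

/-- The determinantal point process associated with an orthonormal family of `N`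
square-integrable functions is a probability measure on `X^N`. -/
theorem determinantal_isProbabilityMeasure {X : Type*} [MeasurableSpace X]
    (μ : Measure X) (N : ℕ) (hN : 0 < N) (f : Fin N → X → ℂ)
    (hmeas : ∀ j, Measurable (f j))
    (hL2 : ∀ j, MemLp (f j) 2 μ)
    (horth : ∀ i j, (∫ x, f i x * (starRingEnd ℂ) (f j x) ∂μ) =
      if i = j then 1 else 0) :
    IsProbabilityMeasure
      ((Measure.pi fun _ : Fin N => μ).withDensity fun x =>
        ENNReal.ofReal ((Nat.factorial N : ℝ)⁻¹ *
          ‖(Matrix.of fun i j : Fin N => f j (x i)).det‖ ^ 2)) := by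
  classical
  constructor
  rw [withDensity_apply _ MeasurableSet.univ, setLIntegral_univ]
  set S : Set X := ⋃ j, {y | f j y ≠ 0} with hSdef
  have hS : MeasurableSet S :=
    MeasurableSet.iUnion fun j => ((hmeas j) (measurableSet_singleton 0)).compl
  have hSzero : ∀ y ∉ S, ∀ j, f j y = 0 := by
    intro y hy j
    by_contra h
    exact hy (Set.mem_iUnion.mpr ⟨j, h⟩)
  haveI : SigmaFinite (μ.restrict S) := sf_restrict μ f hmeas hL2
  set g : (Fin N → X) → ℝ≥0∞ := fun x => ENNReal.ofReal ((Nat.factorial N : ℝ)⁻¹ *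
    ‖(Matrix.of fun i j : Fin N => f j (x i)).det‖ ^ 2) with hgdef
  set A : Set (Fin N → X) := Set.pi Set.univ fun _ => S with hAdef
  have hA : MeasurableSet A := MeasurableSet.univ_pi fun _ => hS
  have hg0 : ∀ x ∉ A, g x = 0 := by
    intro x hx
    rw [hAdef, Set.mem_univ_pi] at hx
    push_neg at hx
    obtain ⟨i, hi⟩ := hx
    have hdet : (Matrix.of fun i j : Fin N => f j (x i)).det = 0 := by
      apply Matrix.det_eq_zero_of_row_eq_zero i
      intro j
      simpa using hSzero (x i) hi j
    rw [hgdef]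
    simp [hdet]
  have hL2' : ∀ j, MemLp (f j) 2 (μ.restrict S) := fun j => (hL2 j).restrict S
  have horth' : ∀ i j, (∫ x, f i x * (starRingEnd ℂ) (f j x) ∂(μ.restrict S)) =
      if i = j then 1 else 0 := by
    intro i j
    rw [← horth i j]
    exact setIntegral_eq_integral_of_forall_compl_eq_zero fun y hy => by
      simp [hSzero y hy i]
  have hcore := core_lintegral (μ.restrict S) N f hmeas hL2' horth'
  have hgind : g = A.indicator g := by
    ext x
    by_cases hx : x ∈ A
    · simp [hx]
    · simp [hx, hg0 x hx]
  refine le_antisymm ?_ ?_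
  · calc ∫⁻ x, g x ∂(Measure.pi fun _ : Fin N => μ)
        = ∫⁻ x, A.indicator g x ∂(Measure.pi fun _ : Fin N => μ) := by rw [← hgind]
      _ = ∫⁻ x in A, g x ∂(Measure.pi fun _ : Fin N => μ) := lintegral_indicator hA _
      _ ≤ ∫⁻ x, g x ∂(Measure.pi fun _ : Fin N => μ.restrict S) :=
          lintegral_mono' (pi_restrict_le μ hS N) le_rfl
      _ = 1 := hcore
  · calc (1:ℝ≥0∞) = ∫⁻ x, g x ∂(Measure.pi fun _ : Fin N => μ.restrict S) := hcore.symm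
      _ ≤ ∫⁻ x, g x ∂(Measure.pi fun _ : Fin N => μ) :=
          lintegral_mono' (pi_mono_of_le fun s => Measure.le_iff'.mp Measure.restrict_le_self s)
            le_rfl
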